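/- Let U_P ⊆ U_R be pattern groups on {1,2,…,n} over F_q, and let I = {u ∈ U_R : u_{ij} ≠ 0 for i ≠ j implies i <_R j and not i <_P j}. If (l−1)(u−1) = 0 (matrix product) for all l ∈ I and u ∈ U_R, then SInd_{U_P}^{U_R}(χ) = Ind_{U_P}^{U_R}(χ) for every superclass function χ of U_P. -/
import Mathlib


/-!
STATEMENT 8: Let U_P ⊆ U_R be pattern groups on {1,…,n} over F_q, and let
I = {u ∈ U_R : u_{ij} ≠ 0 for i ≠ j implies i <_R j and not i <_P j}.
If (l−1)(u−1) = 0 for all l ∈ I and u ∈ U_R, then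
SInd_{U_P}^{U_R}(χ) = Ind_{U_P}^{U_R}(χ) for every superclass function χ of U_P.
-/
open scoped Classical

noncomputable section

def setFinset {α : Type*} [Fintype α] (S : Set α) : Finset α :=
  Finset.univ.filter (· ∈ S)

/-- A strict partial order on `{1,…,n}` that is a subrelation of the usual order. -/
def IsPatternOrder {n : ℕ} (P : Fin n → Fin n → Prop) : Prop :=
  (∀ i j, P i j → i < j) ∧ ∀ i j k, P i j → P j k → P i k

/-- The pattern group `U_P` of unipotent upper-triangular matrices supported on `P`. -/
def patternGroup (F : Type*) [Field F] {n : ℕ} (P : Fin n → Fin n → Prop) :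
    Set (Matrix (Fin n) (Fin n) F) :=
  {u | (∀ i, u i i = 1) ∧ ∀ i j, i ≠ j → u i j ≠ 0 → P i j}

/-- `χ` is constant on the superclasses of `G`: `u ~ v` iff `v − 1 ∈ G(u−1)G`. -/
def IsSuperclassFn {A : Type*} [Ring A] (G : Set A) (χ : A → ℂ) : Prop :=
  ∀ u ∈ G, ∀ v ∈ G, (∃ x ∈ G, ∃ y ∈ G, v - 1 = x * (u - 1) * y) → χ u = χ v

/-- Superinduction `SInd_H^G(χ)(g) = (1/(|G||H|)) Σ_{x,y∈G} χ̇(x(g−1)y + 1)`. -/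
def SInd {A : Type*} [Ring A] [Fintype A] (G H : Set A) (χ : A → ℂ) (g : A) : ℂ :=
  (((setFinset G).card : ℂ) * ((setFinset H).card : ℂ))⁻¹ *
    ∑ x ∈ setFinset G, ∑ y ∈ setFinset G,
      if x * (g - 1) * y + 1 ∈ H then χ (x * (g - 1) * y + 1) else 0

/-- Induction `Ind_H^G(χ)(g) = (1/|H|) Σ_{y∈G} χ̇(y⁻¹ g y)`. -/
def Ind {A : Type*} [Ring A] [Fintype A] (G H : Set A) (χ : A → ℂ) (g : A) : ℂ :=
  ((setFinset H).card : ℂ)⁻¹ *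
    ∑ y ∈ setFinset G,
      if Ring.inverse y * g * y ∈ H then χ (Ring.inverse y * g * y) else 0

/-- The set `I` of matrices supported on the relations of `R` that are not in `P`. -/
def ISet (F : Type*) [Field F] {n : ℕ} (R P : Fin n → Fin n → Prop) :
    Set (Matrix (Fin n) (Fin n) F) :=
  {u | (∀ i, u i i = 1) ∧ ∀ i j, i ≠ j → u i j ≠ 0 → R i j ∧ ¬ P i j}

section Aux

variable {F : Type*} [Field F] {n : ℕ} {Q : Fin n → Fin n → Prop}

/-- Matrices with zero diagonal supported on the pattern `Q`. -/
def NilPat (Q : Fin n → Fin n → Prop) (m : Matrix (Fin n) (Fin n) F) : Prop :=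
  (∀ i, m i i = 0) ∧ ∀ i j, i ≠ j → m i j ≠ 0 → Q i j

lemma NilPat.zero : NilPat Q (0 : Matrix (Fin n) (Fin n) F) :=
  ⟨fun _ => rfl, fun _ _ _ h => absurd rfl h⟩

lemma NilPat.add {m m' : Matrix (Fin n) (Fin n) F} (hm : NilPat Q m) (hm' : NilPat Q m') :
    NilPat Q (m + m') := by
  constructor
  · intro i; simp [Matrix.add_apply, hm.1 i, hm'.1 i]
  · intro i j hij h
    rw [Matrix.add_apply] at h
    by_cases h1 : m i j = 0
    · exact hm'.2 i j hij (by rw [h1, zero_add] at h; exact h)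
    · exact hm.2 i j hij h1

lemma NilPat.neg {m : Matrix (Fin n) (Fin n) F} (hm : NilPat Q m) : NilPat Q (-m) :=
  ⟨fun i => by simp [hm.1 i], fun i j hij h => hm.2 i j hij (by simpa using h)⟩

lemma NilPat.mul (hQ : IsPatternOrder Q) {m m' : Matrix (Fin n) (Fin n) F}
    (hm : NilPat Q m) (hm' : NilPat Q m') : NilPat Q (m * m') := by
  have key : ∀ i j, (m * m') i j ≠ 0 → ∃ k, Q i k ∧ Q k j := by
    intro i j h
    rw [Matrix.mul_apply] at h
    obtain ⟨k, _, hk⟩ := Finset.exists_ne_zero_of_sum_ne_zero h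
    have h1 : m i k ≠ 0 := fun e => hk (by rw [e, zero_mul])
    have h2 : m' k j ≠ 0 := fun e => hk (by rw [e, mul_zero])
    have hik : i ≠ k := fun e => h1 (e ▸ hm.1 i)
    have hkj : k ≠ j := fun e => h2 (by rw [e]; exact hm'.1 j)
    exact ⟨k, hm.2 i k hik h1, hm'.2 k j hkj h2⟩
  constructor
  · intro i
    by_contra h
    obtain ⟨k, hik, hki⟩ := key i i h
    exact absurd (lt_trans (hQ.1 _ _ hik) (hQ.1 _ _ hki)) (lt_irrefl i)
  · intro i j _ h
    obtain ⟨k, h1, h2⟩ := key i j h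
    exact hQ.2 i k j h1 h2

lemma NilPat.sum {ι : Type*} {s : Finset ι} {f : ι → Matrix (Fin n) (Fin n) F}
    (h : ∀ i ∈ s, NilPat Q (f i)) : NilPat Q (∑ i ∈ s, f i) :=
  Finset.sum_induction f _ (fun _ _ => NilPat.add) NilPat.zero h

lemma NilPat.pow_succ' (hQ : IsPatternOrder Q) {m : Matrix (Fin n) (Fin n) F}
    (hm : NilPat Q m) : ∀ k, NilPat Q (m ^ (k + 1))
  | 0 => by simpa using hm
  | k + 1 => by
      rw [pow_succ]
      exact NilPat.mul hQ (NilPat.pow_succ' hQ hm k) hm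

lemma NilPat.pow_card_eq_zero (hQ : IsPatternOrder Q) {m : Matrix (Fin n) (Fin n) F}
    (hm : NilPat Q m) : m ^ n = 0 := by
  have key : ∀ k (i j : Fin n), (m ^ k) i j ≠ 0 → (i : ℕ) + k ≤ (j : ℕ) := by
    intro k
    induction k with
    | zero =>
      intro i j h
      rw [pow_zero] at h
      have hij : i = j := by
        by_contra hij; exact h (Matrix.one_apply_ne hij)
      simp [hij]
    | succ k ih =>
      intro i j h
      rw [pow_succ, Matrix.mul_apply] at h
      obtain ⟨t, _, ht⟩ := Finset.exists_ne_zero_of_sum_ne_zero h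
      have h1 : (m ^ k) i t ≠ 0 := fun e => ht (by rw [e, zero_mul])
      have h2 : m t j ≠ 0 := fun e => ht (by rw [e, mul_zero])
      have htj : (t : ℕ) < (j : ℕ) := by
        have hne : t ≠ j := fun e => h2 (by rw [e]; exact hm.1 j)
        exact hQ.1 t j (hm.2 t j hne h2)
      have := ih i t h1
      omega
  ext i j
  rw [Matrix.zero_apply]
  by_contra h
  have h1 := key n i j h
  have hj : (j : ℕ) < n := j.2
  omega

lemma mem_patternGroup_iff {u : Matrix (Fin n) (Fin n) F} :
    u ∈ patternGroup F Q ↔ NilPat Q (u - 1) := by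
  constructor
  · rintro ⟨h1, h2⟩
    constructor
    · intro i; rw [Matrix.sub_apply, h1 i, Matrix.one_apply_eq, sub_self]
    · intro i j hij h
      rw [Matrix.sub_apply, Matrix.one_apply_ne hij, sub_zero] at h
      exact h2 i j hij h
  · rintro ⟨h1, h2⟩
    constructor
    · intro i
      have := h1 i
      rw [Matrix.sub_apply, Matrix.one_apply_eq, sub_eq_zero] at this
      exact this
    · intro i j hij h
      refine h2 i j hij ?_
      rw [Matrix.sub_apply, Matrix.one_apply_ne hij, sub_zero]
      exact h

lemma add_one_mem_iff {m : Matrix (Fin n) (Fin n) F} :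
    m + 1 ∈ patternGroup F Q ↔ NilPat Q m := by
  rw [mem_patternGroup_iff, add_sub_cancel_right]

lemma patternGroup.one_mem : (1 : Matrix (Fin n) (Fin n) F) ∈ patternGroup F Q := by
  rw [mem_patternGroup_iff, sub_self]; exact NilPat.zero

lemma patternGroup.mul_mem (hQ : IsPatternOrder Q) {u v : Matrix (Fin n) (Fin n) F}
    (hu : u ∈ patternGroup F Q) (hv : v ∈ patternGroup F Q) : u * v ∈ patternGroup F Q := by
  rw [mem_patternGroup_iff] at hu hv ⊢
  have e : u * v - 1 = (u - 1) * (v - 1) + (u - 1) + (v - 1) := by noncomm_ring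
  rw [e]
  exact NilPat.add (NilPat.add (NilPat.mul hQ hu hv) hu) hv

lemma patternGroup.inverse (hQ : IsPatternOrder Q) {u : Matrix (Fin n) (Fin n) F}
    (hu : u ∈ patternGroup F Q) :
    Ring.inverse u * u = 1 ∧ u * Ring.inverse u = 1 ∧ Ring.inverse u ∈ patternGroup F Q := by
  have hnil : NilPat Q (1 - u) := by
    have := (mem_patternGroup_iff.mp hu).neg
    simpa [neg_sub] using this
  set x : Matrix (Fin n) (Fin n) F := 1 - u with hx
  set v : Matrix (Fin n) (Fin n) F := ∑ k ∈ Finset.range (n + 1), x ^ k with hv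
  have hxn : x ^ (n + 1) = 0 := by
    rw [pow_succ, NilPat.pow_card_eq_zero hQ hnil, zero_mul]
  have hxu : x - 1 = -u := by rw [hx]; abel
  have h1 : v * u = 1 := by
    have e := geom_sum_mul x (n + 1)
    rw [hxn, hxu, zero_sub, mul_neg] at e
    exact neg_inj.mp e
  have h2 : u * v = 1 := by
    have e := mul_geom_sum x (n + 1)
    rw [hxn, hxu, zero_sub, neg_mul] at e
    exact neg_inj.mp e
  have hu' : IsUnit u := ⟨⟨u, v, h2, h1⟩, rfl⟩
  have hinv : Ring.inverse u = v := by
    calc Ring.inverse u = 1 * Ring.inverse u := (one_mul _).symm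
    _ = v * u * Ring.inverse u := by rw [h1]
    _ = v * (u * Ring.inverse u) := mul_assoc _ _ _
    _ = v := by rw [Ring.mul_inverse_cancel u hu', mul_one]
  have hvmem : v ∈ patternGroup F Q := by
    rw [mem_patternGroup_iff]
    have e : v - 1 = ∑ k ∈ Finset.range n, x ^ (k + 1) := by
      rw [hv, Finset.sum_range_succ', pow_zero, add_sub_cancel_right]
    rw [e]
    exact NilPat.sum fun k _ => NilPat.pow_succ' hQ hnil k
  rw [hinv]
  exact ⟨h1, h2, hvmem⟩

lemma nil_smul_left (hQ : IsPatternOrder Q) {h m : Matrix (Fin n) (Fin n) F}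
    (hh : h ∈ patternGroup F Q) (hm : NilPat Q m) : NilPat Q (h * m) := by
  have e : h * m = (h - 1) * m + m := by noncomm_ring
  rw [e]
  exact NilPat.add (NilPat.mul hQ (mem_patternGroup_iff.mp hh) hm) hm

lemma mul_add_one_mem_iff (hQ : IsPatternOrder Q) {h : Matrix (Fin n) (Fin n) F}
    (m : Matrix (Fin n) (Fin n) F) (hh : h ∈ patternGroup F Q) :
    h * m + 1 ∈ patternGroup F Q ↔ m + 1 ∈ patternGroup F Q := by
  rw [add_one_mem_iff, add_one_mem_iff]
  constructor
  · intro hnil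
    obtain ⟨h1, _, h3⟩ := patternGroup.inverse hQ hh
    have e : m = Ring.inverse h * (h * m) := by rw [← mul_assoc, h1, one_mul]
    rw [e]
    exact nil_smul_left hQ h3 hnil
  · exact nil_smul_left hQ hh

lemma pointwise_term_eq
    {P R : Fin n → Fin n → Prop}
    (hP : IsPatternOrder P) (hR : IsPatternOrder R)
    (hPR : ∀ i j, P i j → R i j)
    (hzero : ∀ l ∈ ISet F R P, ∀ u ∈ patternGroup F R, (l - 1) * (u - 1) = 0)
    (χ : Matrix (Fin n) (Fin n) F → ℂ) (hχ : IsSuperclassFn (patternGroup F P) χ)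
    {g x y : Matrix (Fin n) (Fin n) F}
    (hg : g ∈ patternGroup F R) (hx : x ∈ patternGroup F R) (hy : y ∈ patternGroup F R) :
    (if x * (g - 1) * y + 1 ∈ patternGroup F P then χ (x * (g - 1) * y + 1) else 0) =
      (if Ring.inverse y * g * y ∈ patternGroup F P then χ (Ring.inverse y * g * y) else 0) := by
  obtain ⟨hy1, hy2, hyinv⟩ := patternGroup.inverse hR hy
  set z := x * y with hzdef
  have hz : z ∈ patternGroup F R := patternGroup.mul_mem hR hx hy
  set l : Matrix (Fin n) (Fin n) F :=
    Matrix.of fun i j => if i = j then 1 else if P i j then 0 else z i j with hl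
  set h : Matrix (Fin n) (Fin n) F := z - l + 1 with hh
  have hlI : l ∈ ISet F R P := by
    constructor
    · intro i; simp [hl]
    · intro i j hij hne
      rw [hl, Matrix.of_apply, if_neg hij] at hne
      by_cases hp : P i j
      · rw [if_pos hp] at hne; exact absurd rfl hne
      · rw [if_neg hp] at hne
        exact ⟨hz.2 i j hij hne, hp⟩
  have hhH : h ∈ patternGroup F P := by
    constructor
    · intro i
      rw [hh, Matrix.add_apply, Matrix.sub_apply, hz.1 i, Matrix.one_apply_eq]
      simp [hl]
    · intro i j hij hne
      by_contra hp
      apply hne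
      rw [hh, Matrix.add_apply, Matrix.sub_apply, Matrix.one_apply_ne hij, hl,
        Matrix.of_apply, if_neg hij, if_neg hp]
      ring
  have hhR : h ∈ patternGroup F R := ⟨hhH.1, fun i j hij hne => hPR i j (hhH.2 i j hij hne)⟩
  have hlh : l * h = z := by
    have e := hzero l hlI h hhR
    have e2 : l * h = l + h - 1 := by
      calc l * h = (l - 1) * (h - 1) + (l + h - 1) := by noncomm_ring
      _ = l + h - 1 := by rw [e, zero_add]
    rw [e2, hh]; abel
  set a := Ring.inverse y * (g - 1) * y with ha
  have hl1h : (l - 1) * h = l - 1 := by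
    have e := hzero l hlI h hhR
    calc (l - 1) * h = (l - 1) * (h - 1) + (l - 1) := by noncomm_ring
    _ = l - 1 := by rw [e, zero_add]
  have hl1y : (l - 1) * Ring.inverse y = l - 1 := by
    have e := hzero l hlI (Ring.inverse y) hyinv
    calc (l - 1) * Ring.inverse y = (l - 1) * (Ring.inverse y - 1) + (l - 1) := by noncomm_ring
    _ = l - 1 := by rw [e, zero_add]
  have hl1a : (l - 1) * a = 0 := by
    calc (l - 1) * a = ((l - 1) * Ring.inverse y) * (g - 1) * y := by
          rw [ha]; simp only [← mul_assoc]
    _ = (l - 1) * (g - 1) * y := by rw [hl1y]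
    _ = 0 := by rw [hzero l hlI g hg, zero_mul]
  have hEq : x * (g - 1) * y = h * a := by
    have e1 : x * (g - 1) * y = z * a := by
      rw [hzdef, ha]
      calc x * (g - 1) * y = x * ((y * Ring.inverse y) * ((g - 1) * y)) := by
            rw [hy2, one_mul, mul_assoc]
      _ = x * y * (Ring.inverse y * (g - 1) * y) := by simp only [mul_assoc]
    have e2 : z * a = h * a := by
      calc z * a = l * (h * a) := by rw [← hlh, mul_assoc]
      _ = (l - 1) * (h * a) + h * a := by noncomm_ring
      _ = ((l - 1) * h) * a + h * a := by rw [mul_assoc]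
      _ = (l - 1) * a + h * a := by rw [hl1h]
      _ = h * a := by rw [hl1a, zero_add]
    rw [e1, e2]
  have hInd : Ring.inverse y * g * y = a + 1 := by
    have e : Ring.inverse y * g * y = Ring.inverse y * (g - 1) * y + Ring.inverse y * y := by
      noncomm_ring
    rw [e, hy1, ha]
  rw [hEq, hInd]
  have hiff := mul_add_one_mem_iff hP a hhH
  by_cases hc : a + 1 ∈ patternGroup F P
  · rw [if_pos (hiff.mpr hc), if_pos hc]
    exact (hχ (a + 1) hc (h * a + 1) (hiff.mpr hc)
      ⟨h, hhH, 1, patternGroup.one_mem, by noncomm_ring⟩).symm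
  · rw [if_neg (fun hc' => hc (hiff.mp hc')), if_neg hc]

end Aux

theorem sind_eq_ind_of_coset_representatives_annihilating
    {n : ℕ} (F : Type*) [Field F] [Fintype F]
    (P R : Fin n → Fin n → Prop)
    (hP : IsPatternOrder P) (hR : IsPatternOrder R)
    (hPR : ∀ i j, P i j → R i j)
    (hzero : ∀ l ∈ ISet F R P, ∀ u ∈ patternGroup F R, (l - 1) * (u - 1) = 0) :
    ∀ χ : Matrix (Fin n) (Fin n) F → ℂ, IsSuperclassFn (patternGroup F P) χ →
      ∀ g ∈ patternGroup F R,
        SInd (patternGroup F R) (patternGroup F P) χ g =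
          Ind (patternGroup F R) (patternGroup F P) χ g := by
  intro χ hχ g hg
  unfold SInd Ind
  have hone : (1 : Matrix (Fin n) (Fin n) F) ∈ setFinset (patternGroup F R) :=
    Finset.mem_filter.mpr ⟨Finset.mem_univ _, patternGroup.one_mem⟩
  have hcard : ((setFinset (patternGroup F R)).card : ℂ) ≠ 0 :=
    Nat.cast_ne_zero.mpr (Finset.card_ne_zero_of_mem hone)
  have hrw : ∑ x ∈ setFinset (patternGroup F R), ∑ y ∈ setFinset (patternGroup F R),
      (if x * (g - 1) * y + 1 ∈ patternGroup F P then χ (x * (g - 1) * y + 1) else 0)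
      = ((setFinset (patternGroup F R)).card : ℂ) *
        ∑ y ∈ setFinset (patternGroup F R),
          (if Ring.inverse y * g * y ∈ patternGroup F P
            then χ (Ring.inverse y * g * y) else 0) := by
    rw [← nsmul_eq_mul, ← Finset.sum_const]
    refine Finset.sum_congr rfl fun x hx => ?_
    refine Finset.sum_congr rfl fun y hy => ?_
    exact pointwise_term_eq hP hR hPR hzero χ hχ hg
      (Finset.mem_filter.mp hx).2 (Finset.mem_filter.mp hy).2
  rw [hrw, mul_inv]
  rw [show (((setFinset (patternGroup F R)).card : ℂ))⁻¹ *
      (((setFinset (patternGroup F P)).card : ℂ))⁻¹ *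
      (((setFinset (patternGroup F R)).card : ℂ) *
        ∑ y ∈ setFinset (patternGroup F R),
          (if Ring.inverse y * g * y ∈ patternGroup F P
            then χ (Ring.inverse y * g * y) else 0))
      = (((setFinset (patternGroup F R)).card : ℂ))⁻¹ *
        ((setFinset (patternGroup F R)).card : ℂ) *
        ((((setFinset (patternGroup F P)).card : ℂ))⁻¹ *
        ∑ y ∈ setFinset (patternGroup F R),
          (if Ring.inverse y * g * y ∈ patternGroup F P
            then χ (Ring.inverse y * g * y) else 0)) from by ring,
    inv_mul_cancel₀ hcard, one_mul]
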